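/- For every real α and real x: (i) for every n ∈ ℕ with n ≥ 2, E^{(α)}_n(x) = L_{n+1} + (x − α/2 − 3)·L_n + Σ_{k=2}^{n} (E^{(α)}_k(x) − 3·E^{(α)}_{k−1}(x))·L_{n−k+1} + 5·Σ_{k=2}^{n} Σ_{s=0}^{k−2} (−1)^{k−s}·2^{k−s−2}·L_{n−k+1}·E^{(α)}_s(x); and (ii) for every n ∈ ℕ with n ≥ 3, n·E^{(α)}_{n−1}(x) = L_n + (2x − α − 3)·L_{n−1} + Σ_{k=3}^{n} (k·E^{(α)}_{k−1}(x) − 3(k−1)·E^{(α)}_{k−2}(x))·L_{n−k+1} + 5·Σ_{k=3}^{n} Σ_{s=1}^{k−2} (−1)^{k−s}·2^{k−s−2}·s·L_{n−k+1}·E^{(α)}_{s−1}(x). -/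

import Mathlib

noncomputable section

/-- `E α x k` is the generalized Euler polynomial `E_k^{(α)}(x)`, characterized by the
generating function `(2/(e^z+1))^α e^{xz} = Σ_k E_k^{(α)}(x) z^k / k!` for `|z| < π`. -/
def IsGenEulerFamily (E : ℝ → ℝ → ℕ → ℝ) : Prop :=
  ∀ α x z : ℝ, |z| < Real.pi →
    HasSum (fun k : ℕ => E α x k * z ^ k / (Nat.factorial k : ℝ))
      ((2 / (Real.exp z + 1)) ^ α * Real.exp (x * z))

/-- The Lucas sequence: `L_1 = 1`, `L_2 = 3`, `L_{m+2} = L_{m+1} + L_m` (so `L_0 = 2`). -/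
def lucasSeq : ℕ → ℕ
  | 0 => 2
  | 1 => 1
  | m + 2 => lucasSeq (m + 1) + lucasSeq m

noncomputable def dcoef : ℕ → ℝ
  | 0 => 1
  | 1 => -3
  | (j+2) => 5 * (-1)^(j+2) * 2^j

lemma kprime_step (m : ℕ) :
    ∑ j ∈ Finset.range (m+3), dcoef j * (lucasSeq (m+3-j) : ℝ)
      = -2 * ∑ j ∈ Finset.range (m+2), dcoef j * (lucasSeq (m+2-j) : ℝ) := by
  rw [Finset.sum_range_succ' (fun j => dcoef j * (lucasSeq (m+3-j) : ℝ)) (m+2)]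
  have hcomb : ∑ j ∈ Finset.range (m+2), dcoef (j+1) * (lucasSeq (m+3-(j+1)) : ℝ)
      + 2 * ∑ j ∈ Finset.range (m+2), dcoef j * (lucasSeq (m+2-j) : ℝ)
      = ∑ j ∈ Finset.range (m+2), (dcoef (j+1) + 2 * dcoef j) * (lucasSeq (m+2-j) : ℝ) := by
    rw [Finset.mul_sum, ← Finset.sum_add_distrib]
    refine Finset.sum_congr rfl fun j hj => ?_
    have : m+3-(j+1) = m+2-j := by omega
    rw [this]; ring
  have hkey : ∑ j ∈ Finset.range (m+2), (dcoef (j+1) + 2 * dcoef j) * (lucasSeq (m+2-j) : ℝ)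
      = -(lucasSeq (m+2) : ℝ) - (lucasSeq (m+1) : ℝ) := by
    rw [Finset.sum_range_succ' (fun j => (dcoef (j+1) + 2 * dcoef j) * (lucasSeq (m+2-j) : ℝ)) (m+1),
        Finset.sum_range_succ' (fun j => (dcoef (j+1+1) + 2 * dcoef (j+1)) * (lucasSeq (m+2-(j+1)) : ℝ)) m]
    have hz : ∑ j ∈ Finset.range m, (dcoef (j+1+1+1) + 2 * dcoef (j+1+1)) * (lucasSeq (m+2-(j+1+1)) : ℝ) = 0 := by
      refine Finset.sum_eq_zero fun j hj => ?_
      have h1 : dcoef (j+1+1+1) = 5 * (-1)^(j+3) * 2^(j+1) := by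
        show dcoef ((j+1)+2) = _; rw [dcoef]
      have h2 : dcoef (j+1+1) = 5 * (-1)^(j+2) * 2^j := by
        show dcoef (j+2) = _; rw [dcoef]
      rw [h1, h2]
      have : (-1:ℝ)^(j+3) = -(-1:ℝ)^(j+2) := by ring
      rw [this]; ring
    rw [hz]
    have d0 : dcoef 0 = 1 := rfl
    have d1 : dcoef 1 = -3 := rfl
    have d2 : dcoef 2 = 5 := by show dcoef (0+2) = 5; rw [dcoef]; norm_num
    simp only [d0, d1, d2]
    push_cast
    ring
  have hL : (lucasSeq (m+3) : ℝ) = (lucasSeq (m+2) : ℝ) + (lucasSeq (m+1) : ℝ) := by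
    show ((lucasSeq ((m+1)+2) : ℕ) : ℝ) = _
    rw [lucasSeq]; push_cast; ring
  have d0 : dcoef 0 = 1 := rfl
  simp only [d0, Nat.sub_zero, one_mul]
  linarith [hcomb, hkey, hL]

lemma kprime : ∀ m : ℕ, ∑ j ∈ Finset.range (m+1), dcoef j * (lucasSeq (m+1-j) : ℝ)
    = if m = 0 then 1 else 0 := by
  have h0 : ∑ j ∈ Finset.range 1, dcoef j * (lucasSeq (1-j) : ℝ) = 1 := by
    simp [dcoef, lucasSeq]
  have h1 : ∀ m : ℕ, ∑ j ∈ Finset.range (m+2), dcoef j * (lucasSeq (m+2-j) : ℝ) = 0 := by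
    intro m
    induction m with
    | zero =>
      have l2 : lucasSeq 2 = 3 := rfl
      have l1 : lucasSeq 1 = 1 := rfl
      have d0 : dcoef 0 = 1 := rfl
      have d1 : dcoef 1 = -3 := rfl
      rw [Finset.sum_range_succ, Finset.sum_range_succ, Finset.sum_range_zero]
      norm_num [l2, l1, d0, d1]
    | succ n ih => rw [show n+1+2 = n+3 from rfl, kprime_step, ih]; ring
  intro m
  match m with
  | 0 => simpa using h0
  | (m+1) => simpa using h1 m

lemma sum_swap' (F : ℕ → ℕ → ℝ) (n : ℕ) :
    ∑ k ∈ Finset.range n, ∑ j ∈ Finset.range (k+1), F j (k-j)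
      = ∑ s ∈ Finset.range n, ∑ j ∈ Finset.range (n-s), F j s := by
  induction n with
  | zero => simp
  | succ n ih =>
    rw [Finset.sum_range_succ, ih]
    conv_rhs => rw [Finset.sum_range_succ]
    have h1 : ∑ s ∈ Finset.range n, ∑ j ∈ Finset.range (n+1-s), F j s
        = ∑ s ∈ Finset.range n, (∑ j ∈ Finset.range (n-s), F j s + F (n-s) s) := by
      refine Finset.sum_congr rfl fun s hs => ?_
      have : n+1-s = (n-s)+1 := by
        have := Finset.mem_range.1 hs; omega
      rw [this, Finset.sum_range_succ]
    rw [h1, Finset.sum_add_distrib]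
    have h2 : ∑ j ∈ Finset.range (n+1), F j (n-j)
        = ∑ j ∈ Finset.range n, F (j+1) (n-(j+1)) + F 0 (n-0) :=
      Finset.sum_range_succ' _ n
    have h3 : ∑ s ∈ Finset.range n, F (n-s) s = ∑ j ∈ Finset.range n, F (j+1) (n-(j+1)) := by
      rw [← Finset.sum_range_reflect]
      refine Finset.sum_congr rfl fun j hj => ?_
      have hj' := Finset.mem_range.1 hj
      have e1 : n - (n-1-j) = j+1 := by omega
      have e2 : n - 1 - j = n - (j+1) := by omega
      rw [e1, e2]
    have h4 : n + 1 - n = 1 := by omega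
    rw [h2, h3, h4]
    simp [Finset.sum_range_succ]
    ring

lemma conv (a : ℕ → ℝ) (n : ℕ) :
    ∑ k ∈ Finset.range (n+1),
      (∑ j ∈ Finset.range (k+1), dcoef j * a (k-j)) * (lucasSeq (n+1-k) : ℝ) = a n := by
  have step1 : ∑ k ∈ Finset.range (n+1),
      (∑ j ∈ Finset.range (k+1), dcoef j * a (k-j)) * (lucasSeq (n+1-k) : ℝ)
      = ∑ k ∈ Finset.range (n+1), ∑ j ∈ Finset.range (k+1),
          (fun j s => dcoef j * a s * (lucasSeq (n+1-(j+s)) : ℝ)) j (k-j) := by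
    refine Finset.sum_congr rfl fun k hk => ?_
    rw [Finset.sum_mul]
    refine Finset.sum_congr rfl fun j hj => ?_
    have : j + (k - j) = k := by
      have := Finset.mem_range.1 hj; omega
    simp only [this]
  rw [step1, sum_swap' (fun j s => dcoef j * a s * (lucasSeq (n+1-(j+s)) : ℝ)) (n+1)]
  have step2 : ∀ s ∈ Finset.range (n+1), ∑ j ∈ Finset.range (n+1-s),
      dcoef j * a s * (lucasSeq (n+1-(j+s)) : ℝ)
      = a s * (if n - s = 0 then 1 else 0) := by
    intro s hs
    have hs' := Finset.mem_range.1 hs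
    have e1 : n+1-s = (n-s)+1 := by omega
    rw [← kprime (n-s), Finset.mul_sum, e1]
    refine Finset.sum_congr rfl fun j hj => ?_
    have hj' := Finset.mem_range.1 hj
    have e2 : n+1-(j+s) = n-s+1-j := by omega
    rw [e2]; ring
  rw [Finset.sum_congr rfl step2]
  rw [Finset.sum_eq_single n]
  · simp
  · intro s hs hne
    have hs' := Finset.mem_range.1 hs
    have : ¬ (n - s = 0) := by omega
    rw [if_neg this, mul_zero]
  · intro h; exact absurd (Finset.self_mem_range_succ n) h

lemma main_alg (a : ℕ → ℝ) (n : ℕ) (hn : 2 ≤ n) :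
    a n = a 0 * (lucasSeq (n+1) : ℝ) + (a 1 - 3 * a 0) * (lucasSeq n : ℝ)
      + ∑ k ∈ Finset.Icc 2 n, (a k - 3 * a (k-1)) * (lucasSeq (n-k+1) : ℝ)
      + 5 * ∑ k ∈ Finset.Icc 2 n, ∑ s ∈ Finset.Icc 0 (k-2),
          (-1 : ℝ)^(k-s) * 2^(k-s-2) * (lucasSeq (n-k+1) : ℝ) * a s := by
  conv_lhs => rw [← conv a n]
  have hsplit : Finset.range (n+1) = insert 0 (insert 1 (Finset.Icc 2 n)) := by
    ext m; simp [Finset.mem_range, Finset.mem_Icc]; omega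
  rw [hsplit, Finset.sum_insert (by simp), Finset.sum_insert (by simp)]
  have c0 : (∑ j ∈ Finset.range (0+1), dcoef j * a (0-j)) * (lucasSeq (n+1-0) : ℝ)
      = a 0 * (lucasSeq (n+1) : ℝ) := by
    rw [Finset.sum_range_one]
    have d0 : dcoef 0 = 1 := rfl
    rw [d0]
    norm_num
  have c1 : (∑ j ∈ Finset.range (1+1), dcoef j * a (1-j)) * (lucasSeq (n+1-1) : ℝ)
      = (a 1 - 3 * a 0) * (lucasSeq n : ℝ) := by
    rw [Finset.sum_range_succ, Finset.sum_range_succ, Finset.sum_range_zero]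
    have d0 : dcoef 0 = 1 := rfl
    have d1 : dcoef 1 = -3 := rfl
    rw [d0, d1]
    rw [show (1:ℕ)-0 = 1 from rfl, show (1:ℕ)-1 = 0 from rfl, show n+1-1 = n from rfl]
    ring
  have ck : ∀ k ∈ Finset.Icc 2 n,
      (∑ j ∈ Finset.range (k+1), dcoef j * a (k-j)) * (lucasSeq (n+1-k) : ℝ)
      = (a k - 3 * a (k-1)) * (lucasSeq (n-k+1) : ℝ)
        + 5 * ∑ s ∈ Finset.Icc 0 (k-2),
            (-1 : ℝ)^(k-s) * 2^(k-s-2) * (lucasSeq (n-k+1) : ℝ) * a s := by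
    intro k hk
    obtain ⟨hk2, hkn⟩ := Finset.mem_Icc.1 hk
    obtain ⟨m, rfl⟩ : ∃ m, k = m + 2 := ⟨k - 2, by omega⟩
    have eL : n+1-(m+2) = n-(m+2)+1 := by omega
    rw [eL]
    set Lr : ℝ := (lucasSeq (n-(m+2)+1) : ℝ)
    rw [Finset.sum_range_succ' (fun j => dcoef j * a (m+2-j)) (m+2),
        Finset.sum_range_succ' (fun j => dcoef (j+1) * a (m+2-(j+1))) (m+1)]
    have d0 : dcoef 0 = 1 := rfl
    have d1 : dcoef 1 = -3 := rfl
    have hicc : Finset.Icc 0 (m+2-2) = Finset.range (m+1) := by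
      ext j; simp [Finset.mem_Icc, Finset.mem_range]
    rw [hicc]
    have hinner : ∑ j ∈ Finset.range (m+1), dcoef (j+1+1) * a (m+2-(j+1+1)) * Lr
        = ∑ s ∈ Finset.range (m+1), 5 * ((-1:ℝ)^(m+2-s) * 2^(m+2-s-2) * Lr * a s) := by
      rw [← Finset.sum_range_reflect (fun s => 5 * ((-1:ℝ)^(m+2-s) * 2^(m+2-s-2) * Lr * a s)) (m+1)]
      refine Finset.sum_congr rfl fun j hj => ?_
      have hj' := Finset.mem_range.1 hj
      have e1 : m+2-(m+1-1-j) = j+2 := by omega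
      have e3 : m+1-1-j = m-j := by omega
      rw [e1, e3]
      rw [show j+1+1 = j+2 from rfl, show m+2-(j+2) = m-j from by omega]
      rw [show dcoef (j+2) = 5 * (-1:ℝ)^(j+2) * 2^j from by rw [dcoef]]
      rw [show j+2-2 = j from rfl]
      ring
    rw [add_mul, add_mul, Finset.sum_mul, hinner, Finset.mul_sum]
    rw [show (0:ℕ)+1 = 1 from rfl, show m+2-1 = m+1 from rfl, show m+2-0 = m+2 from rfl]
    simp only [d0, d1]
    ring
  rw [c0, c1, Finset.sum_congr rfl ck, Finset.sum_add_distrib, Finset.mul_sum]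
  ring

lemma E_zero (E : ℝ → ℝ → ℕ → ℝ) (hE : IsGenEulerFamily E) (α x : ℝ) : E α x 0 = 1 := by
  have h := hE α x 0 (by simpa using Real.pi_pos)
  have h2 : HasSum (fun k : ℕ => E α x k * (0:ℝ) ^ k / (Nat.factorial k : ℝ))
      (E α x 0 * (0:ℝ) ^ 0 / (Nat.factorial 0 : ℝ)) := by
    apply hasSum_single
    intro b hb
    rcases Nat.exists_eq_succ_of_ne_zero hb with ⟨c, rfl⟩
    simp [pow_succ]
  have := h2.unique h
  rw [show (2:ℝ)/(Real.exp 0 + 1) = 1 by rw [Real.exp_zero]; norm_num, Real.one_rpow] at this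
  simpa using this

lemma E_one (E : ℝ → ℝ → ℕ → ℝ) (hE : IsGenEulerFamily E) (α x : ℝ) :
    E α x 1 = x - α / 2 := by
  set h : ℝ → ℝ := fun z => (2 / (Real.exp z + 1)) ^ α * Real.exp (x * z) with hh
  -- boundedness of coefficients
  have pi_gt : (1:ℝ) < Real.pi := by linarith [Real.pi_gt_three]
  have hs1 : Summable (fun k : ℕ => E α x k / (Nat.factorial k : ℝ)) := by
    have := (hE α x 1 (by rw [abs_one]; exact pi_gt)).summable
    simpa using this
  obtain ⟨N, hN⟩ := (Metric.tendsto_atTop.1 hs1.tendsto_atTop_zero) 1 one_pos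
  set C : ℝ := 1 + ∑ k ∈ Finset.range N, |E α x k / (Nat.factorial k : ℝ)| with hC
  have hCpos : 0 ≤ C := by
    have h2 : (0:ℝ) ≤ ∑ k ∈ Finset.range N, |E α x k / (Nat.factorial k : ℝ)| :=
      Finset.sum_nonneg fun _ _ => abs_nonneg _
    rw [hC]; linarith
  have hCb : ∀ k, |E α x k| / (Nat.factorial k : ℝ) ≤ C := by
    intro k
    have habs : |E α x k / (Nat.factorial k : ℝ)| = |E α x k| / (Nat.factorial k : ℝ) := by
      rw [abs_div, Nat.abs_cast]
    rcases lt_or_ge k N with hk | hk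
    · rw [← habs, hC]
      have := Finset.single_le_sum (f := fun k => |E α x k / (Nat.factorial k : ℝ)|)
        (fun _ _ => abs_nonneg _) (Finset.mem_range.2 hk)
      linarith
    · have hd1 := hN k hk
      rw [Real.dist_eq, sub_zero] at hd1
      rw [← habs]
      have h1 : |E α x k / (Nat.factorial k : ℝ)| ≤ 1 := le_of_lt hd1
      have h2 : (0:ℝ) ≤ ∑ k ∈ Finset.range N, |E α x k / (Nat.factorial k : ℝ)| :=
        Finset.sum_nonneg fun _ _ => abs_nonneg _
      rw [hC]; linarith
  -- key tail bound
  have hE0 : E α x 0 = 1 := E_zero E hE α x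
  have key : ∀ z : ℝ, |z| ≤ 1/2 → |h z - 1 - E α x 1 * z| ≤ 2*C*z^2 := by
    intro z hz
    have hzpi : |z| < Real.pi := by linarith [Real.pi_gt_three]
    have hsz := hE α x z hzpi
    have htail : HasSum (fun k : ℕ => E α x (k+2) * z^(k+2) / (Nat.factorial (k+2) : ℝ))
        (h z - ∑ i ∈ Finset.range 2, E α x i * z^i / (Nat.factorial i : ℝ)) :=
      (hasSum_nat_add_iff' 2).mpr hsz
    have hrw : ∑ i ∈ Finset.range 2, E α x i * z^i / (Nat.factorial i : ℝ)
        = 1 + E α x 1 * z := by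
      rw [Finset.sum_range_succ, Finset.sum_range_one]
      simp [hE0, Nat.factorial]
    rw [hrw] at htail
    have hb : ∀ k : ℕ, ‖E α x (k+2) * z^(k+2) / (Nat.factorial (k+2) : ℝ)‖
        ≤ (C * z^2) * (1/2)^k := by
      intro k
      have hfac : (0:ℝ) < (Nat.factorial (k+2) : ℝ) := by positivity
      have e1 : ‖E α x (k+2) * z^(k+2) / (Nat.factorial (k+2) : ℝ)‖
          = (|E α x (k+2)| / (Nat.factorial (k+2) : ℝ)) * |z|^(k+2) := by
        rw [Real.norm_eq_abs, abs_div, abs_mul, Nat.abs_cast, abs_pow]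
        ring
      rw [e1]
      have h1 : (|E α x (k+2)| / (Nat.factorial (k+2) : ℝ)) * |z|^(k+2) ≤ C * |z|^(k+2) :=
        mul_le_mul_of_nonneg_right (hCb (k+2)) (by positivity)
      have h2 : |z|^(k+2) = |z|^2 * |z|^k := by ring
      have h3 : |z|^k ≤ (1/2)^k := pow_le_pow_left₀ (abs_nonneg z) hz k
      have h4 : |z|^2 = z^2 := sq_abs z
      calc (|E α x (k+2)| / (Nat.factorial (k+2) : ℝ)) * |z|^(k+2)
          ≤ C * |z|^(k+2) := h1
        _ = C * (z^2 * |z|^k) := by rw [h2, h4]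
        _ ≤ C * (z^2 * (1/2)^k) := by
            apply mul_le_mul_of_nonneg_left _ hCpos
            exact mul_le_mul_of_nonneg_left h3 (sq_nonneg z)
        _ = (C * z^2) * (1/2)^k := by ring
    have hgeo : HasSum (fun k : ℕ => (C * z^2) * (1/2)^k) ((C * z^2) * 2) := by
      have hg := hasSum_geometric_of_lt_one (by norm_num : (0:ℝ) ≤ 1/2) (by norm_num : (1:ℝ)/2 < 1)
      have := hg.mul_left (C * z^2)
      rw [show (C * z^2) * 2 = C * z^2 * (1 - 1/2)⁻¹ by norm_num]
      exact this
    have := tsum_of_norm_bounded hgeo hb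
    rw [htail.tsum_eq] at this
    calc |h z - 1 - E α x 1 * z| = ‖h z - (1 + E α x 1 * z)‖ := by rw [Real.norm_eq_abs]; ring_nf
      _ ≤ (C * z^2) * 2 := this
      _ = 2*C*z^2 := by ring
  -- derivative of h at 0
  have hu : HasDerivAt (fun z : ℝ => Real.exp z + 1) (Real.exp 0) 0 :=
    (Real.hasDerivAt_exp 0).add_const 1
  have hne : Real.exp 0 + 1 ≠ 0 := by rw [Real.exp_zero]; norm_num
  have hv : HasDerivAt (fun z : ℝ => 2 / (Real.exp z + 1)) (-(1/2)) 0 := by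
    have := (hasDerivAt_const (0:ℝ) (2:ℝ)).div hu hne
    refine this.congr_deriv ?_
    rw [Real.exp_zero]; norm_num
  have hw : HasDerivAt (fun z : ℝ => (2 / (Real.exp z + 1)) ^ α) (-(α/2)) 0 := by
    have h20 : (2:ℝ) / (Real.exp 0 + 1) ≠ 0 := by rw [Real.exp_zero]; norm_num
    have := hv.rpow_const (p := α) (Or.inl h20)
    convert this using 1
    rw [show (2:ℝ) / (Real.exp 0 + 1) = 1 by rw [Real.exp_zero]; norm_num, Real.one_rpow]
    ring
  have hx2 : HasDerivAt (fun z : ℝ => Real.exp (x * z)) x 0 := by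
    have := ((hasDerivAt_id (0:ℝ)).const_mul x).exp
    simpa using this
  have hd : HasDerivAt h (x - α/2) 0 := by
    have := hw.mul hx2
    refine this.congr_deriv ?_
    rw [show (2:ℝ) / (Real.exp 0 + 1) = 1 by rw [Real.exp_zero]; norm_num, Real.one_rpow]
    rw [mul_zero, Real.exp_zero]
    ring
  have h00 : h 0 = 1 := by
    rw [hh]
    simp only [mul_zero, Real.exp_zero, mul_one]
    rw [show (2:ℝ) / (1 + 1) = 1 by norm_num, Real.one_rpow]
  have hslope1 : Filter.Tendsto (slope h 0) (nhdsWithin 0 {(0:ℝ)}ᶜ) (nhds (x - α/2)) :=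
    hasDerivAt_iff_tendsto_slope.1 hd
  have hslope2 : Filter.Tendsto (slope h 0) (nhdsWithin 0 {(0:ℝ)}ᶜ) (nhds (E α x 1)) := by
    rw [← tendsto_sub_nhds_zero_iff]
    apply squeeze_zero_norm' (a := fun z => 2*C*|z|)
    · have hev : ∀ᶠ z in nhds (0:ℝ), |z| ≤ 1/2 := by
        have : Metric.closedBall (0:ℝ) (1/2) ∈ nhds (0:ℝ) :=
          Metric.closedBall_mem_nhds 0 (by norm_num)
        apply Filter.eventually_of_mem this
        intro z hz
        simpa [Real.dist_eq] using hz
      filter_upwards [self_mem_nhdsWithin,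
        eventually_nhdsWithin_of_eventually_nhds hev] with z hz0 hz2
      have hz0' : z ≠ 0 := hz0
      have hzabs : 0 < |z| := abs_pos.2 hz0'
      rw [slope_def_field, sub_zero, h00]
      have e1 : (h z - 1) / z - E α x 1 = (h z - 1 - E α x 1 * z) / z := by
        field_simp
      rw [Real.norm_eq_abs, e1, abs_div]
      rw [div_le_iff₀ hzabs]
      calc |h z - 1 - E α x 1 * z| ≤ 2*C*z^2 := key z hz2
        _ = 2*C*|z| * |z| := by rw [← sq_abs]; ring
    · have hcont : Filter.Tendsto (fun z : ℝ => 2*C*|z|) (nhds 0) (nhds (2*C*|(0:ℝ)|)) :=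
        (continuous_const.mul continuous_abs : Continuous fun z : ℝ => 2*C*|z|).tendsto 0
      rw [abs_zero, mul_zero] at hcont
      exact tendsto_nhdsWithin_of_tendsto_nhds hcont
  exact tendsto_nhds_unique hslope2 hslope1

theorem euler_lucas_identity (E : ℝ → ℝ → ℕ → ℝ) (hE : IsGenEulerFamily E) (α x : ℝ) :
    (∀ n : ℕ, 2 ≤ n →
      E α x n
        = (lucasSeq (n + 1) : ℝ) + (x - α / 2 - 3) * (lucasSeq n : ℝ)
          + ∑ k ∈ Finset.Icc 2 n,
              (E α x k - 3 * E α x (k - 1)) * (lucasSeq (n - k + 1) : ℝ)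
          + 5 * ∑ k ∈ Finset.Icc 2 n, ∑ s ∈ Finset.Icc 0 (k - 2),
              (-1 : ℝ) ^ (k - s) * 2 ^ (k - s - 2) * (lucasSeq (n - k + 1) : ℝ) *
                E α x s) ∧
    (∀ n : ℕ, 3 ≤ n →
      (n : ℝ) * E α x (n - 1)
        = (lucasSeq n : ℝ) + (2 * x - α - 3) * (lucasSeq (n - 1) : ℝ)
          + ∑ k ∈ Finset.Icc 3 n,
              ((k : ℝ) * E α x (k - 1) - 3 * ((k : ℝ) - 1) * E α x (k - 2)) *
                (lucasSeq (n - k + 1) : ℝ)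
          + 5 * ∑ k ∈ Finset.Icc 3 n, ∑ s ∈ Finset.Icc 1 (k - 2),
              (-1 : ℝ) ^ (k - s) * 2 ^ (k - s - 2) * (s : ℝ) *
                (lucasSeq (n - k + 1) : ℝ) * E α x (s - 1)) := by
  have hE0 := E_zero E hE α x
  have hE1 := E_one E hE α x
  constructor
  · intro n hn
    have H := main_alg (E α x) n hn
    rw [hE0, hE1] at H
    rw [H]; ring
  · intro n hn
    obtain ⟨m, rfl⟩ : ∃ m, n = m + 1 := ⟨n - 1, by omega⟩
    have hm : 2 ≤ m := by omega
    have H := main_alg (fun k => ((k : ℝ) + 1) * E α x k) m hm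
    simp only [Nat.cast_zero, Nat.cast_one, zero_add] at H
    rw [hE0, hE1] at H
    have e0 : m + 1 - 1 = m := rfl
    rw [e0]
    have hsum1 : ∑ k ∈ Finset.Icc 3 (m+1),
        ((k : ℝ) * E α x (k - 1) - 3 * ((k : ℝ) - 1) * E α x (k - 2)) * (lucasSeq (m+1-k+1) : ℝ)
        = ∑ k ∈ Finset.Icc 2 m,
            (((k : ℝ) + 1) * E α x k - 3 * ((((k-1 : ℕ) : ℝ) + 1) * E α x (k - 1))) * (lucasSeq (m-k+1) : ℝ) := by
      rw [show Finset.Icc 3 (m+1) = (Finset.Icc 2 m).map (addRightEmbedding 1) from by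
        rw [Finset.map_add_right_Icc], Finset.sum_map]
      refine Finset.sum_congr rfl fun k hk => ?_
      obtain ⟨hk2, hkm⟩ := Finset.mem_Icc.1 hk
      simp only [addRightEmbedding_apply]
      rw [show k+1-1 = k from rfl, show k+1-2 = k-1 from rfl,
          show m+1-(k+1)+1 = m-k+1 from by omega]
      have hc : ((k-1 : ℕ) : ℝ) = (k : ℝ) - 1 := by
        rw [Nat.cast_sub (by omega : 1 ≤ k)]; norm_num
      rw [hc]
      push_cast
      ring
    have hsum2 : ∑ k ∈ Finset.Icc 3 (m+1), ∑ s ∈ Finset.Icc 1 (k - 2),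
        (-1 : ℝ) ^ (k - s) * 2 ^ (k - s - 2) * (s : ℝ) * (lucasSeq (m+1-k+1) : ℝ) * E α x (s - 1)
        = ∑ k ∈ Finset.Icc 2 m, ∑ s ∈ Finset.Icc 0 (k - 2),
            (-1 : ℝ) ^ (k - s) * 2 ^ (k - s - 2) * (lucasSeq (m-k+1) : ℝ) * (((s : ℝ) + 1) * E α x s) := by
      rw [show Finset.Icc 3 (m+1) = (Finset.Icc 2 m).map (addRightEmbedding 1) from by
        rw [Finset.map_add_right_Icc], Finset.sum_map]
      refine Finset.sum_congr rfl fun k hk => ?_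
      obtain ⟨hk2, hkm⟩ := Finset.mem_Icc.1 hk
      simp only [addRightEmbedding_apply]
      rw [show k+1-2 = k-1 from rfl, show m+1-(k+1)+1 = m-k+1 from by omega]
      rw [show Finset.Icc 1 (k-1) = (Finset.Icc 0 (k-2)).map (addRightEmbedding 1) from by
        rw [Finset.map_add_right_Icc]; congr 1; omega, Finset.sum_map]
      refine Finset.sum_congr rfl fun s hs => ?_
      simp only [addRightEmbedding_apply]
      rw [show k+1-(s+1) = k-s from by omega, show k-s-2 = k-s-2 from rfl,
          show s+1-1 = s from rfl]
      push_cast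
      ring
    rw [hsum1, hsum2]
    push_cast
    linarith [H]
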